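/- Let c := 2/(3·81) = 2/243, let k ≥ 2 be a natural number, let ε ∈ (0,4), let δ ∈ (0, 4e^{−4}), and let n ≥ 1 be such that c·ε²·n/ln(4/δ) ≥ 2. Set ε₀ := ln(c·ε²·n/ln(4/δ) − 1). Then log(1 + 8·(e^{ε₀}+1)·( sqrt( ((k+1)/k) · (log(4/δ)/n) · (1/(e^{ε₀}+k−1)) ) + (k+1)/(k·n) )) ≤ 8·ε·sqrt(3c/2) + 3c·ε² < ε. -/
import Mathlib


set_option maxHeartbeats 1000000 in
/-- Verification of the Feldman–McMillan–Talwar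
amplification-by-shuffling privacy bound for `n` users each running
`ε₀`-randomized response over `[k]`, where `ε₀ = ln(cε²n/ln(4/δ) − 1)` with
`c = 2/243`: the shuffled privacy parameter is at most
`8ε√(3c/2) + 3cε² < ε`. -/
theorem shuffling_privacy_bound
    (c : ℝ) (hc : c = 2 / 243)
    (k : ℕ) (hk : 2 ≤ k)
    (ε : ℝ) (hε : ε ∈ Set.Ioo (0 : ℝ) 4)
    (δ : ℝ) (hδ : δ ∈ Set.Ioo (0 : ℝ) (4 * Real.exp (-4)))
    (n : ℝ) (hn : 1 ≤ n)
    (hbig : 2 ≤ c * ε ^ 2 * n / Real.log (4 / δ))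
    (ε₀ : ℝ) (hε₀ : ε₀ = Real.log (c * ε ^ 2 * n / Real.log (4 / δ) - 1)) :
    Real.log (1 + 8 * (Real.exp ε₀ + 1) *
        (Real.sqrt (((k : ℝ) + 1) / (k : ℝ) * (Real.log (4 / δ) / n) *
            (1 / (Real.exp ε₀ + (k : ℝ) - 1)))
          + ((k : ℝ) + 1) / ((k : ℝ) * n)))
      ≤ 8 * ε * Real.sqrt (3 * c / 2) + 3 * c * ε ^ 2
    ∧ 8 * ε * Real.sqrt (3 * c / 2) + 3 * c * ε ^ 2 < ε := by
  obtain ⟨hε0, hε4⟩ := hε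
  obtain ⟨hδ0, hδ4⟩ := hδ
  subst hc
  have hsqrtc : Real.sqrt (3 * (2/243 : ℝ) / 2) = 1/9 := by
    rw [show (3 * (2/243 : ℝ) / 2) = (1/9)^2 by norm_num, Real.sqrt_sq (by norm_num)]
  have hn0 : (0:ℝ) < n := by linarith
  have hk1 : (2:ℝ) ≤ (k:ℝ) := by exact_mod_cast hk
  have hk0 : (0:ℝ) < (k:ℝ) := by linarith
  set L := Real.log (4 / δ) with hL
  have hL4 : (4:ℝ) < L := by
    have h1 : Real.exp 4 < 4 / δ := by
      rw [lt_div_iff₀ hδ0]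
      have : Real.exp 4 * (4 * Real.exp (-4)) = 4 := by
        rw [show Real.exp 4 * (4 * Real.exp (-4)) = 4 * (Real.exp 4 * Real.exp (-4)) by ring,
          ← Real.exp_add]
        norm_num
      nlinarith [Real.exp_pos (4:ℝ)]
    calc (4:ℝ) = Real.log (Real.exp 4) := (Real.log_exp 4).symm
      _ < L := Real.log_lt_log (Real.exp_pos 4) h1
  have hLpos : (0:ℝ) < L := by linarith
  set A := (2/243 : ℝ) * ε ^ 2 * n / L with hA
  have hA2 : (2:ℝ) ≤ A := hbig
  have hexp : Real.exp ε₀ = A - 1 := by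
    rw [hε₀]; exact Real.exp_log (by linarith)
  have hApos : (0:ℝ) < A := by linarith
  -- bound on fraction
  have hfrac : ((k:ℝ) + 1) / (k:ℝ) ≤ 3/2 := by
    rw [div_le_div_iff₀ hk0 (by norm_num)]; linarith
  -- bound on the sqrt term
  have hs0nn : (0:ℝ) ≤ 27/2 * L / (n * ε) := by positivity
  have hS : Real.sqrt (((k : ℝ) + 1) / (k : ℝ) * (L / n) *
      (1 / (Real.exp ε₀ + (k : ℝ) - 1))) ≤ 27/2 * L / (n * ε) := by
    have harg : ((k : ℝ) + 1) / (k : ℝ) * (L / n) * (1 / (Real.exp ε₀ + (k : ℝ) - 1))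
        ≤ 3/2 * (L / n) * (1 / A) := by
      rw [hexp]
      have hd : A ≤ A - 1 + (k:ℝ) - 1 := by linarith
      have hinv : 1 / (A - 1 + (k:ℝ) - 1) ≤ 1 / A :=
        one_div_le_one_div_of_le hApos hd
      have hLn : (0:ℝ) ≤ L / n := by positivity
      have hinvnn : (0:ℝ) ≤ 1 / (A - 1 + (k:ℝ) - 1) := by
        apply div_nonneg (by norm_num); linarith
      have hfnn : (0:ℝ) ≤ ((k:ℝ) + 1) / (k:ℝ) := by positivity
      calc ((k : ℝ) + 1) / (k : ℝ) * (L / n) * (1 / (A - 1 + (k:ℝ) - 1))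
          ≤ 3/2 * (L / n) * (1 / (A - 1 + (k:ℝ) - 1)) := by
            apply mul_le_mul_of_nonneg_right _ hinvnn
            exact mul_le_mul_of_nonneg_right hfrac hLn
        _ ≤ 3/2 * (L / n) * (1 / A) := by
            apply mul_le_mul_of_nonneg_left hinv (by positivity)
    have heq : 3/2 * (L / n) * (1 / A) = (27/2 * L / (n * ε))^2 := by
      rw [hA]
      field_simp
      ring
    calc Real.sqrt (((k : ℝ) + 1) / (k : ℝ) * (L / n) *
          (1 / (Real.exp ε₀ + (k : ℝ) - 1)))
        ≤ Real.sqrt ((27/2 * L / (n * ε))^2) := by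
          apply Real.sqrt_le_sqrt; rw [← heq]; exact harg
      _ = 27/2 * L / (n * ε) := Real.sqrt_sq hs0nn
  -- bound on the second term
  have hT : ((k : ℝ) + 1) / ((k : ℝ) * n) ≤ 3 / (2 * n) := by
    rw [div_le_div_iff₀ (by positivity) (by positivity)]
    nlinarith
  -- the inner expression is nonnegative
  have hSnn : (0:ℝ) ≤ Real.sqrt (((k : ℝ) + 1) / (k : ℝ) * (L / n) *
      (1 / (Real.exp ε₀ + (k : ℝ) - 1))) := Real.sqrt_nonneg _
  have hTnn : (0:ℝ) ≤ ((k : ℝ) + 1) / ((k : ℝ) * n) := by positivity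
  have hX : 8 * (Real.exp ε₀ + 1) *
      (Real.sqrt (((k : ℝ) + 1) / (k : ℝ) * (L / n) *
          (1 / (Real.exp ε₀ + (k : ℝ) - 1)))
        + ((k : ℝ) + 1) / ((k : ℝ) * n))
      ≤ 8 * ε * (1/9) + 3 * (2/243) * ε ^ 2 := by
    have h1 : 8 * (Real.exp ε₀ + 1) *
        (Real.sqrt (((k : ℝ) + 1) / (k : ℝ) * (L / n) *
            (1 / (Real.exp ε₀ + (k : ℝ) - 1)))
          + ((k : ℝ) + 1) / ((k : ℝ) * n))
        ≤ 8 * A * (27/2 * L / (n * ε) + 3 / (2 * n)) := by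
      rw [hexp]
      have hcoef : (0:ℝ) ≤ 8 * (A - 1 + 1) := by linarith
      have := add_le_add hS hT
      calc 8 * (A - 1 + 1) * (Real.sqrt (((k : ℝ) + 1) / (k : ℝ) * (L / n) *
            (1 / (A - 1 + (k:ℝ) - 1))) + ((k : ℝ) + 1) / ((k : ℝ) * n))
          ≤ 8 * (A - 1 + 1) * (27/2 * L / (n * ε) + 3 / (2 * n)) := by
            apply mul_le_mul_of_nonneg_left _ hcoef
            rw [← hexp]; exact this
        _ = 8 * A * (27/2 * L / (n * ε) + 3 / (2 * n)) := by ring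
    have h2 : 8 * A * (27/2 * L / (n * ε) + 3 / (2 * n))
        ≤ 8 * ε * (1/9) + 3 * (2/243) * ε ^ 2 := by
      rw [hA]
      have he1 : (8:ℝ) * ((2/243) * ε ^ 2 * n / L) * (27/2 * L / (n * ε))
          = 8 * ε * (1/9) := by field_simp; ring
      have he2 : (8:ℝ) * ((2/243) * ε ^ 2 * n / L) * (3 / (2 * n))
          = (24/243) * ε^2 / L := by field_simp; ring
      have he3 : (24/243 : ℝ) * ε^2 / L ≤ 3 * (2/243) * ε ^ 2 := by
        rw [div_le_iff₀ hLpos]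
        have h4 : ε^2 * 4 ≤ ε^2 * L := mul_le_mul_of_nonneg_left hL4.le (sq_nonneg ε)
        linarith
      calc 8 * ((2/243) * ε ^ 2 * n / L) * (27/2 * L / (n * ε) + 3 / (2 * n))
          = 8 * ((2/243) * ε ^ 2 * n / L) * (27/2 * L / (n * ε))
            + 8 * ((2/243) * ε ^ 2 * n / L) * (3 / (2 * n)) := by ring
        _ ≤ 8 * ε * (1/9) + 3 * (2/243) * ε ^ 2 := by
            rw [he1, he2]; linarith
    linarith
  constructor
  · rw [hsqrtc]
    have hXnn : (0:ℝ) ≤ 8 * (Real.exp ε₀ + 1) *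
        (Real.sqrt (((k : ℝ) + 1) / (k : ℝ) * (L / n) *
            (1 / (Real.exp ε₀ + (k : ℝ) - 1)))
          + ((k : ℝ) + 1) / ((k : ℝ) * n)) := by
      apply mul_nonneg
      · have := Real.exp_pos ε₀; linarith
      · linarith
    have hlog := Real.log_le_sub_one_of_pos (show (0:ℝ) < 1 + 8 * (Real.exp ε₀ + 1) *
        (Real.sqrt (((k : ℝ) + 1) / (k : ℝ) * (L / n) *
            (1 / (Real.exp ε₀ + (k : ℝ) - 1)))
          + ((k : ℝ) + 1) / ((k : ℝ) * n)) by linarith)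
    linarith
  · rw [hsqrtc]
    nlinarith
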